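/- If the sequence {a_t} minimizes ∑_{t=0}^∞ β^t ℓ(a_t) over all sequences with a_t ≥ 0 for all t and ∑_{t=0}^∞ a_t = x̂, then {a_t} is monotone decreasing, and for every index T one has a_{T+1} = 0 if and only if a_T ≤ η. -/

import Mathlib

open Set Filter ENNReal

open Topology

/-- Total discounted loss `∑_{t=0}^∞ β^t ℓ(a_t)` of an action sequence, valued in `ℝ≥0∞`
(divergent sums are `∞`; the losses `ℓ(a_t)` are nonnegative for feasible sequences). -/
noncomputable def totalLoss (β : ℝ) (ℓ : ℝ → ℝ) (a : ℕ → ℝ) : ℝ≥0∞ :=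
  ∑' t, ENNReal.ofReal (β ^ t * ℓ (a t))

/-- A sequence is feasible for remaining stock `x` if it is nonnegative and sums to `x`. -/
def Feasible (x : ℝ) (a : ℕ → ℝ) : Prop :=
  (∀ t, 0 ≤ a t) ∧ HasSum a x

/-- Auxiliary: split an `ℝ≥0∞`-valued `tsum` at two distinct indices. -/
lemma tsum_split_pair (f : ℕ → ℝ≥0∞) (s t : ℕ) (hts : t ≠ s) :
    ∑' n, f n = f s + (f t + ∑' n, if n = t then 0 else if n = s then 0 else f n) := by
  classical
  have h : ∀ n, f n = (if n = s then f s else 0)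
      + ((if n = t then f t else 0) + (if n = t then 0 else if n = s then 0 else f n)) := by
    intro n
    by_cases h1 : n = s
    · subst h1; simp [Ne.symm hts, hts]
    · by_cases h2 : n = t
      · subst h2; simp [hts]
      · simp [h1, h2]
  rw [tsum_congr h, ENNReal.tsum_add, ENNReal.tsum_add, tsum_ite_eq, tsum_ite_eq]

/-- any minimizer `{a_t}` of the negative discount dynamic program is
monotone decreasing, and for every index `T` one has `a_{T+1} = 0` iff `a_T ≤ η`. -/
theorem optimal_sequence_decreasing_and_stopping_rule
    (xhat : ℝ) (hxhat : 0 < xhat)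
    (ℓ ℓd : ℝ → ℝ)
    (hderiv : ∀ x ∈ Set.Icc 0 xhat, HasDerivAt ℓ (ℓd x) x)
    (hcont_deriv : ContinuousOn ℓd (Set.Icc 0 xhat))
    (hconv : StrictConvexOn ℝ (Set.Icc 0 xhat) ℓ)
    (hzero : ℓ 0 = 0)
    (hpos : ∀ x ∈ Set.Icc 0 xhat, 0 < ℓd x)
    (β : ℝ) (hβ : 1 < β)
    (η : ℝ)
    (hη_mem : η ∈ Set.Icc 0 xhat ∧ ℓd η ≤ β * ℓd 0)
    (hη_max : ∀ x ∈ Set.Icc 0 xhat, ℓd x ≤ β * ℓd 0 → x ≤ η)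
    (a : ℕ → ℝ)
    (hfeas : Feasible xhat a)
    (hmin : ∀ a' : ℕ → ℝ, Feasible xhat a' → totalLoss β ℓ a ≤ totalLoss β ℓ a') :
    Antitone a ∧ ∀ T : ℕ, (a (T + 1) = 0 ↔ a T ≤ η) := by
  classical
  obtain ⟨hnn, hsum⟩ := hfeas
  have hβ0 : (0:ℝ) < β := lt_trans one_pos hβ
  have h0mem : (0:ℝ) ∈ Set.Icc 0 xhat := ⟨le_refl 0, hxhat.le⟩
  have hmem : ∀ t, a t ∈ Set.Icc 0 xhat := fun t =>
    ⟨hnn t, le_hasSum hsum t fun i _ => hnn i⟩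
  have hpairsum : ∀ s t : ℕ, s ≠ t → a s + a t ≤ xhat := by
    intro s t hst
    have := sum_le_hasSum ({s, t} : Finset ℕ) (fun i _ => hnn i) hsum
    rwa [Finset.sum_pair hst] at this
  -- ℓ is nonnegative on the interval
  have hdiffAt : ∀ x ∈ Set.Icc 0 xhat, DifferentiableAt ℝ ℓ x := fun x hx =>
    (hderiv x hx).differentiableAt
  have hderiv_eq : ∀ x ∈ Set.Icc 0 xhat, deriv ℓ x = ℓd x := fun x hx => (hderiv x hx).deriv
  have hlnn : ∀ x ∈ Set.Icc 0 xhat, 0 ≤ ℓ x := by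
    intro x hx
    rcases eq_or_lt_of_le hx.1 with h | h
    · rw [← h, hzero]
    · have hs := hconv.convexOn.deriv_le_slope h0mem hx h (hdiffAt 0 h0mem)
      rw [hderiv_eq 0 h0mem] at hs
      have hslope : slope ℓ 0 x = ℓ x / x := by
        simp [slope_def_field, hzero]
      rw [hslope] at hs
      have hx0 : 0 < ℓ x / x := lt_of_lt_of_le (hpos 0 h0mem) hs
      rcases div_pos_iff.mp hx0 with ⟨h1, _⟩ | ⟨_, h2⟩
      · exact h1.le
      · linarith
  -- ℓd is strictly monotone on the interval
  have hsm : StrictMonoOn ℓd (Set.Icc 0 xhat) := by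
    intro x hx y hy hxy
    have h := hconv.strictMonoOn_deriv hdiffAt hx hy hxy
    rwa [hderiv_eq x hx, hderiv_eq y hy] at h
  -- the minimizer has finite total loss
  have hfin : totalLoss β ℓ a ≠ ⊤ := by
    have hfeas1 : Feasible xhat (fun n => if n = 0 then xhat else 0) := by
      refine ⟨fun t => ?_, hasSum_ite_eq 0 xhat⟩
      by_cases h : t = 0 <;> simp [h, hxhat.le]
    have hle := hmin _ hfeas1
    have heq : totalLoss β ℓ (fun n => if n = 0 then xhat else 0)
        = ENNReal.ofReal (β ^ 0 * ℓ xhat) := by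
      refine tsum_eq_single 0 ?_
      intro b hb
      simp [hb, hzero]
    rw [heq] at hle
    exact ne_top_of_le_ne_top ofReal_ne_top hle
  -- the key exchange inequality
  have key : ∀ s t : ℕ, s ≠ t → ∀ ε : ℝ, 0 < ε → ε ≤ a t →
      β ^ s * ℓ (a s) + β ^ t * ℓ (a t) ≤ β ^ s * ℓ (a s + ε) + β ^ t * ℓ (a t - ε) := by
    intro s t hst ε hε hεt
    have hts : t ≠ s := hst.symm
    set a' : ℕ → ℝ := fun n => a n + (if n = s then ε else 0) - (if n = t then ε else 0)
      with ha'def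
    have ha's : a' s = a s + ε := by simp [ha'def, if_neg hst]
    have ha't : a' t = a t - ε := by simp [ha'def, if_neg hts]
    have ha'o : ∀ n, n ≠ s → n ≠ t → a' n = a n := by
      intro n h1 h2; simp [ha'def, if_neg h1, if_neg h2]
    have hfeas' : Feasible xhat a' := by
      constructor
      · intro n
        by_cases h1 : n = s
        · subst h1; rw [ha's]; have := hnn n; linarith
        · by_cases h2 : n = t
          · subst h2; rw [ha't]; linarith
          · rw [ha'o n h1 h2]; exact hnn n
      · have h1 : HasSum (fun n => if n = s then ε else 0) ε := hasSum_ite_eq s ε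
        have h2 : HasSum (fun n => if n = t then ε else 0) ε := hasSum_ite_eq t ε
        have := (hsum.add h1).sub h2
        simpa using this
    -- membership facts
    have hasε : a s + ε ∈ Set.Icc 0 xhat := by
      have := hpairsum s t hst
      constructor
      · have := hnn s; linarith
      · linarith
    have hatε : a t - ε ∈ Set.Icc 0 xhat := by
      constructor
      · linarith
      · have := hmem t; have := this.2; linarith
    -- compare total losses, cancelling the common remainder
    have hle := hmin a' hfeas'
    set F : ℕ → ℝ≥0∞ := fun n => ENNReal.ofReal (β ^ n * ℓ (a n)) with hF
    set G : ℕ → ℝ≥0∞ := fun n => ENNReal.ofReal (β ^ n * ℓ (a' n)) with hG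
    have hFs : totalLoss β ℓ a = F s + (F t + ∑' n, if n = t then 0 else if n = s then 0 else F n) :=
      tsum_split_pair F s t hts
    have hGs : totalLoss β ℓ a' = G s + (G t + ∑' n, if n = t then 0 else if n = s then 0 else G n) :=
      tsum_split_pair G s t hts
    have hremeq : (∑' n, if n = t then 0 else if n = s then 0 else G n)
        = (∑' n, if n = t then 0 else if n = s then 0 else F n) := by
      apply tsum_congr
      intro n
      by_cases h1 : n = t
      · simp [h1]
      · by_cases h2 : n = s
        · simp [h1, h2]
        · simp [h1, h2, hG, hF, ha'o n h2 h1]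
    rw [hFs, hGs, hremeq] at hle
    set R : ℝ≥0∞ := ∑' n, if n = t then 0 else if n = s then 0 else F n with hR
    have hRle : R ≤ totalLoss β ℓ a := by
      rw [totalLoss]
      apply ENNReal.tsum_le_tsum
      intro n
      by_cases h1 : n = t
      · simp [h1]
      · by_cases h2 : n = s <;> simp [h1, h2, hF]
    have hRfin : R ≠ ⊤ := ne_top_of_le_ne_top hfin hRle
    rw [← add_assoc, ← add_assoc] at hle
    have hcore : F s + F t ≤ G s + G t := (ENNReal.add_le_add_iff_right hRfin).mp hle
    -- translate back to reals
    have h1 : (0:ℝ) ≤ β ^ s * ℓ (a s) := mul_nonneg (by positivity) (hlnn _ (hmem s))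
    have h2 : (0:ℝ) ≤ β ^ t * ℓ (a t) := mul_nonneg (by positivity) (hlnn _ (hmem t))
    have h3 : (0:ℝ) ≤ β ^ s * ℓ (a s + ε) := mul_nonneg (by positivity) (hlnn _ hasε)
    have h4 : (0:ℝ) ≤ β ^ t * ℓ (a t - ε) := mul_nonneg (by positivity) (hlnn _ hatε)
    have hFsum : F s + F t = ENNReal.ofReal (β ^ s * ℓ (a s) + β ^ t * ℓ (a t)) := by
      rw [hF, ← ENNReal.ofReal_add h1 h2]
    have hGsum : G s + G t = ENNReal.ofReal (β ^ s * ℓ (a s + ε) + β ^ t * ℓ (a t - ε)) := by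
      rw [hG]; simp only [ha's, ha't]; rw [← ENNReal.ofReal_add h3 h4]
    rw [hFsum, hGsum] at hcore
    exact (ENNReal.ofReal_le_ofReal_iff (by linarith)).mp hcore
  -- first-order condition
  have foc : ∀ s t : ℕ, s ≠ t → 0 < a t → β ^ t * ℓd (a t) ≤ β ^ s * ℓd (a s) := by
    intro s t hst hat
    set h : ℝ → ℝ := fun ε => β ^ s * ℓ (a s + ε) + β ^ t * ℓ (a t - ε) with hh_def
    have hds : HasDerivAt (fun ε : ℝ => ℓ (a s + ε)) (ℓd (a s)) 0 := by
      have h1 : HasDerivAt (fun ε : ℝ => a s + ε) 1 0 := by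
        simpa using (hasDerivAt_id (0:ℝ)).const_add (a s)
      have h2 : HasDerivAt ℓ (ℓd (a s)) ((fun ε : ℝ => a s + ε) 0) := by
        simpa using hderiv (a s) (hmem s)
      have := h2.comp 0 h1
      rwa [mul_one] at this
    have hdt : HasDerivAt (fun ε : ℝ => ℓ (a t - ε)) (-ℓd (a t)) 0 := by
      have h1 : HasDerivAt (fun ε : ℝ => a t - ε) (-1) 0 := by
        exact (hasDerivAt_id (0:ℝ)).const_sub (a t)
      have h2 : HasDerivAt ℓ (ℓd (a t)) ((fun ε : ℝ => a t - ε) 0) := by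
        simpa using hderiv (a t) (hmem t)
      have := h2.comp 0 h1
      rwa [mul_neg_one] at this
    have hdh : HasDerivAt h (β ^ s * ℓd (a s) + β ^ t * (-ℓd (a t))) 0 :=
      (hds.const_mul (β ^ s)).add (hdt.const_mul (β ^ t))
    have htend : Tendsto (slope h 0) (𝓝[>] (0:ℝ))
        (𝓝 (β ^ s * ℓd (a s) + β ^ t * (-ℓd (a t)))) := by
      refine (hasDerivAt_iff_tendsto_slope.mp hdh).mono_left (nhdsWithin_mono _ ?_)
      intro x hx
      exact ne_of_gt hx
    have hev : ∀ᶠ ε in 𝓝[>] (0:ℝ), 0 ≤ slope h 0 ε := by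
      filter_upwards [Ioc_mem_nhdsGT hat] with ε hε
      have hkey := key s t hst ε hε.1 hε.2
      have hh0 : h 0 = β ^ s * ℓ (a s) + β ^ t * ℓ (a t) := by simp [hh_def]
      have hhε : h ε = β ^ s * ℓ (a s + ε) + β ^ t * ℓ (a t - ε) := rfl
      have : h 0 ≤ h ε := by rw [hh0, hhε]; exact hkey
      rw [slope_def_field]
      apply div_nonneg (by linarith) (by linarith [hε.1])
    have hD : 0 ≤ β ^ s * ℓd (a s) + β ^ t * (-ℓd (a t)) :=
      ge_of_tendsto htend hev
    linarith
  -- antitone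
  have hanti : Antitone a := by
    apply antitone_nat_of_succ_le
    intro n
    by_contra hcon
    push_neg at hcon
    have hpos1 : 0 < a (n + 1) := lt_of_le_of_lt (hnn n) hcon
    have hfoc := foc n (n + 1) (by omega) hpos1
    have hmono : ℓd (a n) < ℓd (a (n + 1)) := hsm (hmem n) (hmem (n + 1)) hcon
    have hposn : 0 < ℓd (a n) := hpos _ (hmem n)
    have hpw : (β:ℝ) ^ n < β ^ (n + 1) := pow_lt_pow_right₀ hβ (lt_add_one n)
    have : β ^ n * ℓd (a n) < β ^ (n + 1) * ℓd (a (n + 1)) :=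
      mul_lt_mul hpw hmono.le hposn (by positivity)
    linarith
  refine ⟨hanti, fun T => ⟨?_, ?_⟩⟩
  · -- a (T+1) = 0 → a T ≤ η
    intro hT1
    by_contra hcon
    push_neg at hcon
    have haT : 0 < a T := lt_of_le_of_lt hη_mem.1.1 hcon
    have hfoc := foc (T + 1) T (by omega) haT
    rw [hT1] at hfoc
    have hβT : (0:ℝ) < β ^ T := by positivity
    have h1 : ℓd (a T) ≤ β * ℓd 0 := by
      have : β ^ T * ℓd (a T) ≤ β ^ T * (β * ℓd 0) := by
        calc β ^ T * ℓd (a T) ≤ β ^ (T + 1) * ℓd 0 := hfoc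
        _ = β ^ T * (β * ℓd 0) := by ring
      exact le_of_mul_le_mul_left this hβT
    exact absurd (hη_max _ (hmem T) h1) (not_le.mpr hcon)
  · -- a T ≤ η → a (T+1) = 0
    intro hTη
    by_contra hcon
    have hpos1 : 0 < a (T + 1) := lt_of_le_of_ne (hnn _) (Ne.symm hcon)
    have hfoc := foc T (T + 1) (by omega) hpos1
    have hβT : (0:ℝ) < β ^ T := by positivity
    have h1 : β * ℓd (a (T + 1)) ≤ ℓd (a T) := by
      have : β ^ T * (β * ℓd (a (T + 1))) ≤ β ^ T * ℓd (a T) := by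
        calc β ^ T * (β * ℓd (a (T + 1))) = β ^ (T + 1) * ℓd (a (T + 1)) := by ring
        _ ≤ β ^ T * ℓd (a T) := hfoc
      exact le_of_mul_le_mul_left this hβT
    have h2 : ℓd 0 < ℓd (a (T + 1)) := hsm h0mem (hmem (T + 1)) hpos1
    have h3 : ℓd (a T) ≤ ℓd η := by
      rcases eq_or_lt_of_le hTη with h | h
      · rw [h]
      · exact (hsm (hmem T) hη_mem.1 h).le
    have h4 : ℓd η ≤ β * ℓd 0 := hη_mem.2
    nlinarith [hβ0]
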